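/- Let F = F_{4^d}, d ≥ 2 (characteristic 2), with 4^d ≡ 1 mod 3. There exist x, y ∈ F, not both zero, with (x + y + xy)(x + y) + xy = 0; moreover for any such solution with x, y, x+y nonzero, setting z = x + y one has x + y + z = 0 and x^{−2} + y^{−2} + z^{−2} = 1. -/

import Mathlib

/-- covering the point P(0,1) in the completeness proof for V₁ in
PG(2d−1,4): existence of a nontrivial solution of (x+y+xy)(x+y)+xy = 0, and the
induced relations for z = x + y. -/
theorem stmt14 (d : ℕ) (hd : 2 ≤ d) (F : Type) [Field F] [Fintype F]
    (hcard : Fintype.card F = 4 ^ d) (hmod : 4 ^ d % 3 = 1) :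
    (∃ x y : F, (x, y) ≠ (0, 0) ∧ (x + y + x * y) * (x + y) + x * y = 0) ∧
    ∀ x y : F, x ≠ 0 → y ≠ 0 → x + y ≠ 0 →
      (x + y + x * y) * (x + y) + x * y = 0 →
      x + y + (x + y) = 0 ∧ x⁻¹ ^ 2 + y⁻¹ ^ 2 + (x + y)⁻¹ ^ 2 = 1 := by
  have hp2 : (2 : F) = 0 := by
    haveI hch : CharP F (ringChar F) := ringChar.charP F
    obtain ⟨n, hp, hc⟩ := FiniteField.card F (ringChar F)
    have h4 : (4 : ℕ) ^ d = 2 ^ (2 * d) := by rw [pow_mul]; norm_num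
    have hpd : ringChar F ∣ 2 ^ (2 * d) := by
      rw [← h4, ← hcard, hc]; exact dvd_pow_self _ n.pos.ne'
    have h2 : ringChar F = 2 := by
      have h := Nat.Prime.dvd_of_dvd_pow hp hpd
      exact (Nat.prime_dvd_prime_iff_eq hp Nat.prime_two).mp h
    have := CharP.cast_eq_zero F (ringChar F)
    rw [h2] at this
    exact_mod_cast this
  classical
  have hex : ∃ t : F, t ^ 4 ≠ t := by
    by_contra h
    push_neg at h
    have hpne : (Polynomial.X ^ 4 - Polynomial.X : Polynomial F) ≠ 0 := by
      intro hz
      have h4 := congrArg (fun p => Polynomial.coeff p 4) hz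
      simp [Polynomial.coeff_X] at h4
    have hsub : (Finset.univ : Finset F) ⊆
        (Polynomial.X ^ 4 - Polynomial.X : Polynomial F).roots.toFinset := by
      intro a _
      rw [Multiset.mem_toFinset, Polynomial.mem_roots hpne]
      simp [h a, sub_eq_zero]
    have hle : Fintype.card F ≤ 4 := by
      calc Fintype.card F = (Finset.univ : Finset F).card := rfl
        _ ≤ (Polynomial.X ^ 4 - Polynomial.X : Polynomial F).roots.toFinset.card :=
            Finset.card_le_card hsub
        _ ≤ Multiset.card (Polynomial.X ^ 4 - Polynomial.X : Polynomial F).roots :=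
            Multiset.toFinset_card_le _
        _ ≤ (Polynomial.X ^ 4 - Polynomial.X : Polynomial F).natDegree :=
            Polynomial.card_roots' _
        _ ≤ 4 := by compute_degree
    have h16 : 16 ≤ Fintype.card F := by
      rw [hcard]
      calc (16 : ℕ) = 4 ^ 2 := by norm_num
        _ ≤ 4 ^ d := Nat.pow_le_pow_right (by norm_num) hd
    omega
  obtain ⟨t, ht⟩ := hex
  have hprod : t * (t + 1) * (t ^ 2 + t + 1) ≠ 0 := by
    intro h
    exact ht (by linear_combination h - (t ^ 3 + t ^ 2 + t) * hp2)
  have ht0 : t ≠ 0 := fun h => hprod (by rw [h]; ring)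
  have ht1 : t + 1 ≠ 0 := fun h => hprod (by rw [h]; ring)
  have htc : t ^ 2 + t + 1 ≠ 0 := fun h => hprod (by rw [h]; ring)
  have htq : t ^ 2 + t ≠ 0 := by
    intro h
    exact ht0 (by have : t * (t + 1) = 0 := by linear_combination h
                  rcases mul_eq_zero.mp this with h' | h'
                  · exact h'
                  · exact absurd h' ht1)
  constructor
  · refine ⟨(t ^ 2 + t + 1) / (t ^ 2 + t), t * ((t ^ 2 + t + 1) / (t ^ 2 + t)), ?_, ?_⟩
    · have hx : (t ^ 2 + t + 1) / (t ^ 2 + t) ≠ 0 := div_ne_zero htc htq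
      simp [Prod.ext_iff, hx]
    · field_simp
      linear_combination (1 + 5 * t + 12 * t ^ 2 + 18 * t ^ 3 + 18 * t ^ 4 +
        12 * t ^ 5 + 5 * t ^ 6 + t ^ 7) * hp2
  · intro x y hx hy hxy heq
    constructor
    · linear_combination (x + y) * hp2
    · field_simp
      linear_combination ((x + y + x * y) * (x + y) + x * y) * heq + (-(2 * y * x ^ 3) - y * x ^ 4 - 4 * y ^ 2 * x ^ 2 - 4 * y ^ 2 * x ^ 3 - y ^ 2 * x ^ 4
        - 2 * y ^ 3 * x - 4 * y ^ 3 * x ^ 2 - 2 * y ^ 3 * x ^ 3 - y ^ 4 * x - y ^ 4 * x ^ 2) * hp2
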